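/- Let e and q be coprime integers with 2 ≤ e < q, and let (a,b) be a pair of integers with a·e − b·q = 1 for which |a| is minimal. Set σ = sign(a), c = −2a + σ·q, and d = −2b + σ·e. Then the four integers a, b, c, d are simultaneously nonnegative or simultaneously nonpositive; more precisely, if a > 0 then a > 0, b > 0, c > 0 and d ≥ 0, and if a < 0 then a < 0, b < 0, c < 0 and d ≤ 0. Moreover, if e is odd then d ≠ 0. -/

import Mathlib

/-- For a minimal Bezout pair `(a, b)` for `(e, q)` and `σ = sign a`, `c = -2a + σq`,
`d = -2b + σe`, the integers `a, b, c, d` are simultaneously nonnegative or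
simultaneously nonpositive; moreover `d ≠ 0` when `e` is odd. -/
theorem stmt2 (e q a b σ c d : ℤ) (he : 2 ≤ e) (hq : e < q) (hcop : IsCoprime e q)
    (hab : a * e - b * q = 1)
    (hmin : ∀ a' b' : ℤ, a' * e - b' * q = 1 → |a| ≤ |a'|)
    (hσ : σ = Int.sign a) (hc : c = -2 * a + σ * q) (hd : d = -2 * b + σ * e) :
    (0 < a → 0 < a ∧ 0 < b ∧ 0 < c ∧ 0 ≤ d) ∧
    (a < 0 → a < 0 ∧ b < 0 ∧ c < 0 ∧ d ≤ 0) ∧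
    (Odd e → d ≠ 0) := by
  subst hσ hc hd
  have hq3 : 3 ≤ q := by linarith
  rcases lt_trichotomy a 0 with ha | ha | ha
  · -- a < 0
    have hs : Int.sign a = -1 := Int.sign_eq_neg_one_of_neg ha
    rw [hs]
    have key := hmin (a + q) (b + e) (by linear_combination hab)
    rw [abs_of_neg ha] at key
    have h2a : -(2*a) ≤ q := by
      rcases abs_cases (a + q) with ⟨h1, h2⟩ | ⟨h1, h2⟩ <;> rw [h1] at key <;> linarith
    have hb : b < 0 := by nlinarith
    have hcne : -(2*a) ≠ q := by
      intro h
      have h1 : a * (e + 2*b) = 1 := by linear_combination hab - b * h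
      have := Int.isUnit_iff.mp (IsUnit.of_mul_eq_one _ h1)
      rcases this with h2 | h2 <;> omega
    have hdle : -(2*b) ≤ e := by
      nlinarith [mul_le_mul_of_nonneg_right h2a (by linarith : (0:ℤ) ≤ e)]
    refine ⟨fun h => absurd h (by linarith), fun _ => ⟨ha, hb, by linarith [lt_of_le_of_ne h2a hcne], by linarith⟩, ?_⟩
    intro hodd hd0
    rcases hodd with ⟨k, hk⟩
    omega
  · -- a = 0 : contradiction
    exfalso
    subst ha
    have hb1 : b * q = -1 := by linarith
    rcases le_or_gt 0 b with hb | hb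
    · nlinarith
    · nlinarith
  · -- a > 0
    have hs : Int.sign a = 1 := Int.sign_eq_one_of_pos ha
    rw [hs]
    have key := hmin (a - q) (b - e) (by linear_combination hab)
    rw [abs_of_pos ha] at key
    have h2a : 2*a ≤ q := by
      rcases abs_cases (a - q) with ⟨h1, h2⟩ | ⟨h1, h2⟩ <;> rw [h1] at key <;> linarith
    have hb : 0 < b := by nlinarith
    have hcne : 2*a ≠ q := by
      intro h
      have h1 : a * (e - 2*b) = 1 := by linear_combination hab - b * h
      have := Int.isUnit_iff.mp (IsUnit.of_mul_eq_one _ h1)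
      rcases this with h2 | h2 <;> omega
    have hdlt : 2*b < e := by
      nlinarith [mul_le_mul_of_nonneg_right h2a (by linarith : (0:ℤ) ≤ e)]
    exact ⟨fun _ => ⟨ha, hb, by linarith [lt_of_le_of_ne h2a hcne], by linarith⟩,
      fun h => absurd h (by linarith), fun _ => by intro h0; omega⟩
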